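/- Let d̃ be an invertible d×d real matrix such that ᵀd̃·d̃ = I + S·A⁻¹·S, where S is symmetric positive definite, A is symmetric positive definite, and ‖A‖ ≤ C. Then the conorm of d̃ satisfies m(d̃)² ≥ 1 + m(S²)/C, where m(T) = ‖T⁻¹‖⁻¹ and ‖·‖ is the operator norm. -/

import Mathlib

open Matrix
open scoped Matrix.Norms.L2Operator
open scoped Pointwise

/-- The smallest eigenvalue of a matrix. -/
noncomputable def minEig {d : ℕ} (M : Matrix (Fin d) (Fin d) ℝ) : ℝ :=
  sInf {r : ℝ | Module.End.HasEigenvalue M.mulVecLin r}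

lemma minEig_set {d : ℕ} {M : Matrix (Fin d) (Fin d) ℝ} (hM : M.IsHermitian) :
    {r : ℝ | Module.End.HasEigenvalue M.mulVecLin r} = Set.range hM.eigenvalues := by
  ext r
  rw [Set.mem_setOf_eq, Module.End.hasEigenvalue_iff_mem_spectrum]
  have h1 : Matrix.mulVecLin M = Matrix.toLinAlgEquiv' M := rfl
  rw [h1, AlgEquiv.spectrum_eq Matrix.toLinAlgEquiv' M, hM.spectrum_real_eq_range_eigenvalues]

-- Lemma 1: quadratic lower bound via minEig
lemma minEig_quad {d : ℕ} (hd : 0 < d) {M : Matrix (Fin d) (Fin d) ℝ}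
    (hM : M.IsHermitian) (x : Fin d → ℝ) :
    minEig M * (x ⬝ᵥ x) ≤ x ⬝ᵥ M *ᵥ x := by
  have : Nonempty (Fin d) := Fin.pos_iff_nonempty.mp hd
  have hlam_le : ∀ i, minEig M ≤ hM.eigenvalues i := by
    intro i
    unfold minEig
    rw [minEig_set hM]
    exact csInf_le (Set.finite_range _).bddBelow ⟨i, rfl⟩
  set lam := minEig M with hlam
  -- M - lam • 1 is positive semidefinite
  have hherm : (M - lam • 1).IsHermitian := by
    unfold Matrix.IsHermitian
    rw [conjTranspose_sub, hM, conjTranspose_smul, conjTranspose_one, star_trivial]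
  have hpsd : (M - lam • 1).PosSemidef := by
    apply hherm.posSemidef_iff_eigenvalues_nonneg.mpr
    intro i
    show 0 ≤ hherm.eigenvalues i
    have hsub : spectrum ℝ (M - lam • 1) ⊆ spectrum ℝ M - ({lam} : Set ℝ) := by
      have h1 := spectrum.sub_singleton_eq M lam
      rw [Algebra.algebraMap_eq_smul_one] at h1
      rw [h1]
    have hmem := hsub (hherm.eigenvalues_mem_spectrum_real i)
    obtain ⟨a, ha, b, hb, hab⟩ := Set.mem_sub.mp hmem
    rw [Set.mem_singleton_iff] at hb
    subst hb
    have : a ∈ Set.range hM.eigenvalues := by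
      rw [← hM.spectrum_real_eq_range_eigenvalues]; exact ha
    obtain ⟨j, rfl⟩ := this
    have := hlam_le j
    linarith [hab ▸ (by linarith : (0:ℝ) ≤ hM.eigenvalues j - lam)]
  have h2 := hpsd.dotProduct_mulVec_nonneg x
  simp only [star_trivial] at h2
  rw [sub_mulVec, dotProduct_sub, smul_mulVec, one_mulVec, dotProduct_smul,
    smul_eq_mul] at h2
  linarith

lemma herm_transpose {d : ℕ} {H : Matrix (Fin d) (Fin d) ℝ} (hH : H.IsHermitian) : Hᵀ = H := by
  rw [← Matrix.conjTranspose_eq_transpose_of_trivial]; exact hH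

lemma herm_dot {d : ℕ} {H : Matrix (Fin d) (Fin d) ℝ} (hH : H.IsHermitian)
    (x y : Fin d → ℝ) : x ⬝ᵥ H *ᵥ y = (H *ᵥ x) ⬝ᵥ y := by
  rw [dotProduct_mulVec, ← vecMul_transpose, herm_transpose hH]

lemma dot_sq_norm {d : ℕ} (v : Fin d → ℝ) :
    v ⬝ᵥ v = ‖(WithLp.equiv 2 (Fin d → ℝ)).symm v‖ ^ 2 := by
  rw [EuclideanSpace.norm_eq, Real.sq_sqrt (Finset.sum_nonneg fun i _ => sq_nonneg _)]
  simp [dotProduct, sq]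

-- Lemma 2
open scoped MatrixOrder in
lemma posdef_inv_quad {d : ℕ} {A : Matrix (Fin d) (Fin d) ℝ} (hA : A.PosDef)
    (y : Fin d → ℝ) : y ⬝ᵥ y ≤ ‖A‖ * (y ⬝ᵥ A⁻¹ *ᵥ y) := by
  set R := CFC.sqrt A with hRdef
  have hR2 : R * R = A := CFC.sqrt_mul_sqrt_self A hA.posSemidef.nonneg
  have hRh : R.IsHermitian := (CFC.sqrt_nonneg A).posSemidef.1
  have hRdet : IsUnit R.det := by
    have hdA : 0 < A.det := hA.det_pos
    rw [← hR2, Matrix.det_mul] at hdA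
    exact isUnit_iff_ne_zero.mpr (by nlinarith)
  have hAinv : A⁻¹ = R⁻¹ * R⁻¹ := by rw [← hR2, Matrix.mul_inv_rev]
  set z := R⁻¹ *ᵥ y with hz
  have hinvh : R⁻¹.IsHermitian := hRh.inv
  have h1 : y ⬝ᵥ A⁻¹ *ᵥ y = z ⬝ᵥ z := by
    rw [hAinv, ← Matrix.mulVec_mulVec, herm_dot hinvh]
  have h2 : R *ᵥ z = y := by
    rw [hz, Matrix.mulVec_mulVec, Matrix.mul_nonsing_inv R hRdet, Matrix.one_mulVec]
  have h3 : ‖(WithLp.equiv 2 (Fin d → ℝ)).symm y‖ ≤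
      ‖R‖ * ‖(WithLp.equiv 2 (Fin d → ℝ)).symm z‖ := by
    have := Matrix.l2_opNorm_mulVec R ((WithLp.equiv 2 (Fin d → ℝ)).symm z)
    rw [show (R *ᵥ ((WithLp.equiv 2 (Fin d → ℝ)).symm z) : Fin d → ℝ) = y from h2] at this
    exact this
  have hnA : ‖A‖ = ‖R‖ * ‖R‖ := by
    rw [← hR2, ← Matrix.l2_opNorm_conjTranspose_mul_self R]
    congr 1
    rw [hRh.eq]
  rw [h1, hnA, dot_sq_norm y, dot_sq_norm z]
  have h0 : 0 ≤ ‖(WithLp.equiv 2 (Fin d → ℝ)).symm y‖ := norm_nonneg _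
  nlinarith [norm_nonneg ((WithLp.equiv 2 (Fin d → ℝ)).symm z), norm_nonneg R]

theorem conorm_sq_ge {d : ℕ} (hd : 0 < d) (C : ℝ)
    (dtil S A : Matrix (Fin d) (Fin d) ℝ) (hdtil : IsUnit dtil)
    (hS : S.PosDef) (hA : A.PosDef) (hC : ‖A‖ ≤ C)
    (heq : dtilᵀ * dtil = 1 + S * A⁻¹ * S) :
    (‖dtil⁻¹‖⁻¹) ^ 2 ≥ 1 + minEig (S * S) / C := by
  have hne : Nonempty (Fin d) := Fin.pos_iff_nonempty.mp hd
  have hC0 : 0 < C := by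
    refine lt_of_lt_of_le ?_ hC
    refine norm_pos_iff.mpr ?_
    intro h0
    have := hA.det_pos
    rw [h0, Matrix.det_zero] at this
    exact lt_irrefl 0 this
  have hSS : (S * S).IsHermitian := by
    unfold Matrix.IsHermitian
    rw [conjTranspose_mul, hS.1]
  set lam := minEig (S * S) with hlamdef
  have hlam0 : 0 ≤ lam := by
    have hP : (S * S).PosSemidef := by
      have := Matrix.posSemidef_conjTranspose_mul_self S
      rwa [hS.1] at this
    rw [hlamdef]
    unfold minEig
    rw [minEig_set hSS]
    refine le_csInf (Set.range_nonempty _) ?_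
    rintro b ⟨i, rfl⟩
    exact hP.eigenvalues_nonneg i
  set c := 1 + lam / C with hcdef
  have hc0 : 0 < c := by positivity
  -- key quadratic inequality
  have key : ∀ v : Fin d → ℝ, c * (v ⬝ᵥ v) ≤ (dtil *ᵥ v) ⬝ᵥ (dtil *ᵥ v) := by
    intro v
    have hvv : 0 ≤ v ⬝ᵥ v := by
      rw [dot_sq_norm]; positivity
    have e1 : (dtil *ᵥ v) ⬝ᵥ (dtil *ᵥ v) = v ⬝ᵥ (dtilᵀ * dtil) *ᵥ v := by
      rw [← Matrix.mulVec_mulVec, Matrix.dotProduct_mulVec v, vecMul_transpose]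
    set w := S *ᵥ v with hw
    have e2 : v ⬝ᵥ (S * A⁻¹ * S) *ᵥ v = w ⬝ᵥ A⁻¹ *ᵥ w := by
      rw [Matrix.mul_assoc, ← Matrix.mulVec_mulVec, herm_dot hS.1, ← Matrix.mulVec_mulVec]
    have e3 : w ⬝ᵥ w ≤ ‖A‖ * (w ⬝ᵥ A⁻¹ *ᵥ w) := posdef_inv_quad hA w
    have e4 : lam * (v ⬝ᵥ v) ≤ w ⬝ᵥ w := by
      have h := minEig_quad hd hSS v
      rwa [← Matrix.mulVec_mulVec, herm_dot hS.1] at h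
    have e5 : 0 ≤ w ⬝ᵥ A⁻¹ *ᵥ w := by
      have := hA.inv.posSemidef.dotProduct_mulVec_nonneg w
      simpa using this
    have e6 : lam / C * (v ⬝ᵥ v) ≤ w ⬝ᵥ A⁻¹ *ᵥ w := by
      rw [div_mul_eq_mul_div, div_le_iff₀ hC0]
      calc lam * (v ⬝ᵥ v) ≤ w ⬝ᵥ w := e4
        _ ≤ ‖A‖ * (w ⬝ᵥ A⁻¹ *ᵥ w) := e3
        _ ≤ C * (w ⬝ᵥ A⁻¹ *ᵥ w) := mul_le_mul_of_nonneg_right hC e5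
        _ = (w ⬝ᵥ A⁻¹ *ᵥ w) * C := mul_comm _ _
    rw [e1, heq, Matrix.add_mulVec, Matrix.one_mulVec, dotProduct_add, e2]
    have : c * (v ⬝ᵥ v) = v ⬝ᵥ v + lam / C * (v ⬝ᵥ v) := by ring
    linarith
  -- the matrix dtil is invertible
  have hdet : IsUnit dtil.det := (Matrix.isUnit_iff_isUnit_det dtil).mp hdtil
  have hinv : dtil * dtil⁻¹ = 1 := Matrix.mul_nonsing_inv dtil hdet
  -- norm bound
  have hbound : ‖dtil⁻¹‖ ≤ (Real.sqrt c)⁻¹ := by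
    rw [Matrix.cstar_norm_def]
    refine ContinuousLinearMap.opNorm_le_bound _ (by positivity) ?_
    intro y
    set v : Fin d → ℝ := WithLp.equiv 2 (Fin d → ℝ) y with hv
    set x : Fin d → ℝ := dtil⁻¹ *ᵥ v with hx
    have hy : y = (WithLp.equiv 2 (Fin d → ℝ)).symm v := by
      rw [hv, Equiv.symm_apply_apply]
    have happ : Matrix.toEuclideanCLM (n := Fin d) (𝕜 := ℝ) dtil⁻¹ y
        = (WithLp.equiv 2 (Fin d → ℝ)).symm x := by
      rw [hy, Matrix.toEuclideanCLM_toLp]; rfl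
    have hdx : dtil *ᵥ x = v := by
      rw [hx, Matrix.mulVec_mulVec, hinv, Matrix.one_mulVec]
    have hk := key x
    rw [hdx] at hk
    rw [happ, hy]
    have hsq : ‖(WithLp.equiv 2 (Fin d → ℝ)).symm x‖ ^ 2
        ≤ ((Real.sqrt c)⁻¹ * ‖(WithLp.equiv 2 (Fin d → ℝ)).symm v‖) ^ 2 := by
      rw [mul_pow, inv_pow, Real.sq_sqrt hc0.le, ← dot_sq_norm, ← dot_sq_norm,
        inv_mul_eq_div, le_div_iff₀ hc0]
      linarith
    calc ‖(WithLp.equiv 2 (Fin d → ℝ)).symm x‖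
        = Real.sqrt (‖(WithLp.equiv 2 (Fin d → ℝ)).symm x‖ ^ 2) :=
          (Real.sqrt_sq (norm_nonneg _)).symm
      _ ≤ Real.sqrt (((Real.sqrt c)⁻¹ * ‖(WithLp.equiv 2 (Fin d → ℝ)).symm v‖) ^ 2) :=
          Real.sqrt_le_sqrt hsq
      _ = (Real.sqrt c)⁻¹ * ‖(WithLp.equiv 2 (Fin d → ℝ)).symm v‖ :=
          Real.sqrt_sq (by positivity)
  have hpos : 0 < ‖dtil⁻¹‖ := by
    refine norm_pos_iff.mpr ?_
    intro h0
    have h1 : dtil * dtil⁻¹ = dtil * 0 := by rw [h0]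
    rw [hinv, mul_zero] at h1
    have := congrFun (congrFun h1 ⟨0, hd⟩) ⟨0, hd⟩
    simp [Matrix.one_apply_eq] at this
  have hsc : Real.sqrt c ≤ ‖dtil⁻¹‖⁻¹ := by
    have := inv_anti₀ hpos hbound
    rwa [inv_inv] at this
  calc (1 : ℝ) + lam / C = c := rfl
    _ = (Real.sqrt c) ^ 2 := (Real.sq_sqrt hc0.le).symm
    _ ≤ (‖dtil⁻¹‖⁻¹) ^ 2 := pow_le_pow_left₀ (Real.sqrt_nonneg c) hsc 2
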